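/- For A = K[x,y]/(x^p, y^p - x - t) where K has characteristic p and t has no p-th root in K, the Jacobson radical of A is the ideal generated by the image of x. -/

import Mathlib

open MvPolynomial in
/-- The algebra `A = K[x,y]/(x^p, y^p - x - t)` where `x, y` are the variables `X 0, X 1`. -/
abbrev quotAlg (K : Type*) [Field K] (p : ℕ) (t : K) : Type _ :=
  MvPolynomial (Fin 2) K ⧸
    (Ideal.span {X 0 ^ p, X 1 ^ p - X 0 - C t} : Ideal (MvPolynomial (Fin 2) K))

open MvPolynomial in
theorem Jmax (K : Type*) [Field K] (p : ℕ) (hp : p.Prime) (t : K)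
    (ht : ∀ b : K, b ^ p ≠ t) :
    (Ideal.span {X 0, X 1 ^ p - C t} : Ideal (MvPolynomial (Fin 2) K)).IsMaximal := by
  have hirr : Fact (Irreducible (Polynomial.X ^ p - Polynomial.C t)) :=
    ⟨X_pow_sub_C_irreducible_of_prime hp ht⟩
  set f : Polynomial K := Polynomial.X ^ p - Polynomial.C t with hf
  set L := AdjoinRoot f
  set J : Ideal (MvPolynomial (Fin 2) K) := Ideal.span {X 0, X 1 ^ p - C t} with hJ
  set φ : MvPolynomial (Fin 2) K →+* L :=
    (MvPolynomial.aeval ![0, AdjoinRoot.root f] : MvPolynomial (Fin 2) K →ₐ[K] L).toRingHom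
    with hφ
  have hX0 : φ (X 0) = 0 := by simp [hφ]
  have hX1 : φ (X 1) = AdjoinRoot.root f := by simp [hφ]
  have hJker : J ≤ RingHom.ker φ := by
    rw [hJ, Ideal.span_le]
    rintro q (rfl | rfl) <;> simp [RingHom.mem_ker, map_sub, map_pow, hX0, hX1, hφ, hf]
    · have := AdjoinRoot.eval₂_root f
      rw [AdjoinRoot.algebraMap_eq]; simpa [hf, Polynomial.eval₂_sub, Polynomial.eval₂_pow] using this
  have hker : RingHom.ker φ = J := by
    refine le_antisymm ?_ hJker
    -- build inverse
    have hX1J : Polynomial.eval₂ (algebraMap K (MvPolynomial (Fin 2) K ⧸ J))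
        (Ideal.Quotient.mk J (X 1)) f = 0 := by
      rw [hf]
      rw [Polynomial.eval₂_sub, Polynomial.eval₂_pow, Polynomial.eval₂_X, Polynomial.eval₂_C,
        ← map_pow]
      have : (Ideal.Quotient.mk J) (X 1 ^ p) - algebraMap K _ t
          = Ideal.Quotient.mk J (X 1 ^ p - C t) := by
        simp [Ideal.Quotient.algebraMap_eq, map_sub]
        rfl
      rw [this, Ideal.Quotient.eq_zero_iff_mem]
      exact Ideal.subset_span (by simp)
    set ψ : L →+* MvPolynomial (Fin 2) K ⧸ J :=
      AdjoinRoot.lift (algebraMap K _) (Ideal.Quotient.mk J (X 1)) hX1J with hψ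
    set φbar : MvPolynomial (Fin 2) K ⧸ J →+* L :=
      Ideal.Quotient.lift J φ (fun a ha => hJker ha) with hφbar
    have hcomp : ψ.comp (φbar.comp (Ideal.Quotient.mk J)) =
        (Ideal.Quotient.mk J : MvPolynomial (Fin 2) K →+* _) := by
      apply MvPolynomial.ringHom_ext
      · intro a
        simp only [RingHom.comp_apply]
        rw [show φbar ((Ideal.Quotient.mk J) (C a)) = φ (C a) from Ideal.Quotient.lift_mk _ _ _]
        rw [show φ (C a) = algebraMap K L a from by simp [hφ]]
        rw [show (algebraMap K L a) = AdjoinRoot.of f a from by rw [AdjoinRoot.algebraMap_eq]]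
        rw [hψ, AdjoinRoot.lift_of]
        rfl
      · intro i
        fin_cases i
        · simp only [RingHom.comp_apply]
          show ψ (φbar ((Ideal.Quotient.mk J) (X (0 : Fin 2)))) =
            (Ideal.Quotient.mk J) (X (0 : Fin 2))
          rw [show φbar ((Ideal.Quotient.mk J) (X 0)) = φ (X 0) from Ideal.Quotient.lift_mk _ _ _,
            hX0, map_zero]
          exact (Ideal.Quotient.eq_zero_iff_mem.mpr (Ideal.subset_span (by simp))).symm
        · simp only [RingHom.comp_apply]
          show ψ (φbar ((Ideal.Quotient.mk J) (X (1 : Fin 2)))) =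
            (Ideal.Quotient.mk J) (X (1 : Fin 2))
          rw [show φbar ((Ideal.Quotient.mk J) (X 1)) = φ (X 1) from Ideal.Quotient.lift_mk _ _ _,
            hX1, hψ, AdjoinRoot.lift_root]
    intro q hq
    rw [RingHom.mem_ker] at hq
    have : ψ (φbar (Ideal.Quotient.mk J q)) = Ideal.Quotient.mk J q :=
      congrArg (fun g => g q) hcomp
    rw [show φbar (Ideal.Quotient.mk J q) = φ q from rfl, hq, map_zero] at this
    exact Ideal.Quotient.eq_zero_iff_mem.mp this.symm
  have hsurj : Function.Surjective φ := by
    intro z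
    obtain ⟨g, rfl⟩ := AdjoinRoot.mk_surjective (g := f) z
    refine ⟨Polynomial.aeval (X 1 : MvPolynomial (Fin 2) K) g, ?_⟩
    show (MvPolynomial.aeval ![0, AdjoinRoot.root f] : MvPolynomial (Fin 2) K →ₐ[K] L)
      (Polynomial.aeval (X 1 : MvPolynomial (Fin 2) K) g) = _
    rw [← Polynomial.aeval_algHom_apply]
    simp only [aeval_X, Matrix.cons_val_one, Matrix.head_cons]
    exact AdjoinRoot.aeval_eq g
  exact hker ▸ RingHom.ker_isMaximal_of_surjective φ hsurj


set_option synthInstance.maxHeartbeats 1000000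
set_option maxHeartbeats 1000000

open MvPolynomial in
/-- For `A = K[x,y]/(x^p, y^p - x - t)` where `K` has characteristic `p > 0` and `t` has no
`p`-th root in `K`, the Jacobson radical of `A` is the ideal generated by the image of `x`. -/
theorem stmt_7 (K : Type*) [Field K] (p : ℕ) [CharP K p] (hp : 0 < p) (t : K)
    (ht : ¬ ∃ s : K, s ^ p = t) :
    (⊥ : Ideal (quotAlg K p t)).jacobson =
      Ideal.span {Ideal.Quotient.mk _ (X 0 : MvPolynomial (Fin 2) K)} := by
  have hpp : p.Prime := (CharP.char_is_prime_or_zero K p).resolve_right hp.ne'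
  push_neg at ht
  set I : Ideal (MvPolynomial (Fin 2) K) := Ideal.span {X 0 ^ p, X 1 ^ p - X 0 - C t} with hI
  set J : Ideal (MvPolynomial (Fin 2) K) := Ideal.span {X 0, X 1 ^ p - C t} with hJ
  have hmaxJ : J.IsMaximal := Jmax K p hpp t ht
  have hIJ : I ≤ J := by
    rw [hI, Ideal.span_le]
    rintro q (rfl | rfl)
    · exact Ideal.pow_mem_of_mem J (Ideal.subset_span (by simp)) p hp
    · have h1 : (X 1 ^ p - C t : MvPolynomial (Fin 2) K) ∈ J :=
        Ideal.subset_span (by simp)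
      have h0 : (X 0 : MvPolynomial (Fin 2) K) ∈ J := Ideal.subset_span (by simp)
      have := Ideal.sub_mem J h1 h0
      show _ ∈ J; convert this using 1; ring
  have hmapJ : Ideal.map (Ideal.Quotient.mk I) J
      = Ideal.span {Ideal.Quotient.mk I (X 0)} := by
    rw [hJ, Ideal.map_span, Set.image_insert_eq, Set.image_singleton]
    apply le_antisymm
    · rw [Ideal.span_le]
      rintro q (rfl | rfl)
      · exact Ideal.subset_span rfl
      · have : Ideal.Quotient.mk I (X 1 ^ p - C t) = Ideal.Quotient.mk I (X 0) := by
          rw [Ideal.Quotient.mk_eq_mk_iff_sub_mem]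
          have : (X 1 ^ p - C t - X 0 : MvPolynomial (Fin 2) K)
              = X 1 ^ p - X 0 - C t := by ring
          rw [this]
          exact Ideal.subset_span (by simp)
        rw [this]
        exact Ideal.subset_span rfl
    · exact Ideal.span_mono (by simp)
  have hmax : (Ideal.span {Ideal.Quotient.mk I (X 0)}).IsMaximal := by
    rw [← hmapJ]
    rcases Ideal.map_eq_top_or_isMaximal_of_surjective (Ideal.Quotient.mk I)
      Ideal.Quotient.mk_surjective hmaxJ with h | h
    · exfalso
      have := congrArg (Ideal.comap (Ideal.Quotient.mk I)) h
      rw [Ideal.comap_map_of_surjective _ Ideal.Quotient.mk_surjective, Ideal.comap_top] at this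
      have hkb : Ideal.comap (Ideal.Quotient.mk I) ⊥ = I := by
        rw [← RingHom.ker_eq_comap_bot, Ideal.mk_ker]
      rw [hkb, sup_eq_left.mpr hIJ] at this
      exact hmaxJ.ne_top this
    · exact h
  apply le_antisymm
  · exact sInf_le ⟨bot_le, hmax⟩
  · rw [Ideal.span_le, Set.singleton_subset_iff, SetLike.mem_coe]
    apply Ideal.radical_le_jacobson
    refine ⟨p, ?_⟩
    rw [← map_pow, Ideal.mem_bot, Ideal.Quotient.eq_zero_iff_mem]
    exact Ideal.subset_span (by simp)
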